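/- Let σ > 0 and let e, d : ℝ → ℝ^n be differentiable functions satisfying e'(t) = d(t) − 2σ e(t) and d'(t) = −σ² e(t) for all t ≥ 0. Then e(t) → 0 and d(t) → 0 as t → ∞. -/

import Mathlib

open Filter Real

-- auxiliary: zero derivative on [0,∞) implies constant there
lemma const_of_deriv_zero_Ici {E : Type*} [NormedAddCommGroup E] [NormedSpace ℝ E]
    (f : ℝ → E) (hf : ∀ t : ℝ, 0 ≤ t → HasDerivAt f 0 t) :
    ∀ t : ℝ, 0 ≤ t → f t = f 0 := by
  intro t ht
  have := constant_of_has_deriv_right_zero (f := f) (a := 0) (b := t)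
    (fun x hx => ((hf x hx.1).continuousAt).continuousWithinAt)
    (fun x hx => (hf x hx.1).hasDerivWithinAt)
  exact this t ⟨ht, le_rfl⟩

/-- asymptotic disturbance compensation by the extended state
observer, for a constant disturbance: if `σ > 0` and `e' = d - 2σ e`, `d' = -σ² e`
for all `t ≥ 0`, then `e(t) → 0` and `d(t) → 0` as `t → ∞`. -/
theorem eso_error_convergence
    (n : ℕ) (hn : 1 ≤ n) (σ : ℝ) (hσ : 0 < σ)
    (e d : ℝ → (Fin n → ℝ))
    (he : ∀ t : ℝ, 0 ≤ t → HasDerivAt e (d t - (2 * σ) • e t) t)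
    (hd : ∀ t : ℝ, 0 ≤ t → HasDerivAt d (-((σ ^ 2) • e t)) t) :
    Tendsto e atTop (nhds 0) ∧ Tendsto d atTop (nhds 0) := by
  set u : ℝ → (Fin n → ℝ) := fun t => d t - σ • e t with hu_def
  have hu : ∀ t : ℝ, 0 ≤ t → HasDerivAt u (-(σ • u t)) t := by
    intro t ht
    have h := (hd t ht).sub ((he t ht).const_smul σ)
    refine h.congr_deriv ?_
    simp only [hu_def]
    ext i
    simp [smul_sub, smul_smul]
    ring
  have hexp : ∀ t : ℝ, HasDerivAt (fun s => Real.exp (σ * s)) (σ * Real.exp (σ * t)) t := by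
    intro t
    have h1 : HasDerivAt (fun s : ℝ => σ * s) σ t := by simpa using (hasDerivAt_id t).const_mul σ
    have := (Real.hasDerivAt_exp (σ * t)).comp t h1
    refine this.congr_deriv ?_; ring
  -- F t = exp(σ t) • u t is constant on [0,∞)
  have hF : ∀ t : ℝ, 0 ≤ t → Real.exp (σ * t) • u t = u 0 := by
    have hF' : ∀ t : ℝ, 0 ≤ t →
        HasDerivAt (fun s => Real.exp (σ * s) • u s) 0 t := by
      intro t ht
      have := (hexp t).smul (hu t ht)
      refine this.congr_deriv ?_
      ext i
      simp [smul_smul]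
      ring
    intro t ht
    have := const_of_deriv_zero_Ici _ hF' t ht
    simpa using this
  -- G t = exp(σ t) • e t - t • u 0 is constant on [0,∞)
  have hG : ∀ t : ℝ, 0 ≤ t → Real.exp (σ * t) • e t = e 0 + t • u 0 := by
    have hG' : ∀ t : ℝ, 0 ≤ t →
        HasDerivAt (fun s => Real.exp (σ * s) • e s - s • u 0) 0 t := by
      intro t ht
      have h1 := (hexp t).smul (he t ht)
      have h2 : HasDerivAt (fun s : ℝ => s • u 0) ((1:ℝ) • u 0) t :=
        (hasDerivAt_id t).smul_const (u 0)
      have h3 := h1.sub h2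
      refine h3.congr_deriv ?_
      have hFt := hF t ht
      rw [← hFt]
      ext i
      simp only [hu_def, Pi.sub_apply, Pi.smul_apply, Pi.zero_apply, Pi.add_apply,
        smul_eq_mul, one_smul]
      ring
    intro t ht
    have := const_of_deriv_zero_Ici _ hG' t ht
    simp only [zero_smul, sub_zero, Real.exp_zero, mul_zero, one_smul] at this
    linear_combination (norm := abel) this
  -- explicit formulas on [0,∞)
  have he_formula : ∀ t : ℝ, 0 ≤ t →
      e t = Real.exp (-(σ * t)) • e 0 + (t * Real.exp (-(σ * t))) • u 0 := by
    intro t ht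
    have h := hG t ht
    have : e t = Real.exp (-(σ * t)) • (Real.exp (σ * t) • e t) := by
      rw [smul_smul, Real.exp_neg, inv_mul_cancel₀ (Real.exp_ne_zero _), one_smul]
    rw [this, h, smul_add, smul_smul]
    ring_nf
  have hu_formula : ∀ t : ℝ, 0 ≤ t → u t = Real.exp (-(σ * t)) • u 0 := by
    intro t ht
    have h := hF t ht
    rw [← h, smul_smul, Real.exp_neg, inv_mul_cancel₀ (Real.exp_ne_zero _), one_smul]
  -- limits of scalar coefficients
  have hlin : Tendsto (fun t : ℝ => σ * t) atTop atTop :=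
    tendsto_id.const_mul_atTop hσ
  have hexp0 : Tendsto (fun t : ℝ => Real.exp (-(σ * t))) atTop (nhds 0) :=
    Real.tendsto_exp_atBot.comp (tendsto_neg_atBot_iff.mpr hlin)
  have htexp0 : Tendsto (fun t : ℝ => t * Real.exp (-(σ * t))) atTop (nhds 0) := by
    have h1 : Tendsto (fun x : ℝ => x * Real.exp (-x)) atTop (nhds 0) := by
      simpa using Real.tendsto_pow_mul_exp_neg_atTop_nhds_zero 1
    have h2 := (h1.comp hlin).const_mul (1 / σ)
    simp only [mul_zero] at h2
    refine h2.congr fun t => ?_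
    simp only [Function.comp_apply]
    field_simp
  have hetendsto : Tendsto e atTop (nhds 0) := by
    have h : Tendsto (fun t : ℝ => Real.exp (-(σ * t)) • e 0 +
        (t * Real.exp (-(σ * t))) • u 0) atTop (nhds 0) := by
      have := (hexp0.smul_const (e 0)).add (htexp0.smul_const (u 0))
      simpa using this
    exact h.congr' (by filter_upwards [eventually_ge_atTop (0:ℝ)] with t ht using
      (he_formula t ht).symm)
  have hutendsto : Tendsto u atTop (nhds 0) := by
    have h := hexp0.smul_const (u 0)
    simp only [zero_smul] at h
    exact h.congr' (by filter_upwards [eventually_ge_atTop (0:ℝ)] with t ht using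
      (hu_formula t ht).symm)
  refine ⟨hetendsto, ?_⟩
  have : Tendsto (fun t => u t + σ • e t) atTop (nhds 0) := by
    have := hutendsto.add (hetendsto.const_smul σ)
    simpa using this
  refine this.congr fun t => ?_
  simp [hu_def]
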